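/- Fix n ∈ ℕ. The polynomial function j ↦ e_i(1,…,1 (n-j times), -1,…,-1 (j times)), i.e. C_i(j) = ∑_{k=0}^{i} C(n-j,i-k)(-1)^k C(j,k) viewed as a rational polynomial in j, has degree exactly i, i.e. the coefficient of j^i is nonzero, for 0 ≤ i ≤ n. -/

import Mathlib

open Polynomial

/-- The polynomial `C_i(x) = ∑_{k=0}^{i} C(n-x, i-k) * (-1)^k * C(x,k)` in `ℚ[x]`,
with binomial coefficients extended polynomially via falling factorials:
`C(y,k) = y(y-1)⋯(y-k+1)/k!`. -/
noncomputable def Cpoly (n i : ℕ) : Polynomial ℚ :=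
  ∑ k ∈ Finset.range (i + 1),
    (((-1 : ℚ) ^ k / ((i - k).factorial * k.factorial : ℚ)) •
      ((∏ ℓ ∈ Finset.range (i - k), ((C (n : ℚ) - X) - C (ℓ : ℚ))) *
        ∏ ℓ ∈ Finset.range k, (X - C (ℓ : ℚ))))

lemma prodXsub_monic (m : ℕ) (a : ℕ → ℚ) :
    (∏ ℓ ∈ Finset.range m, (X - C (a ℓ))).Monic :=
  monic_prod_of_monic _ _ fun ℓ _ => monic_X_sub_C (a ℓ)

lemma prodXsub_natDegree (m : ℕ) (a : ℕ → ℚ) :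
    (∏ ℓ ∈ Finset.range m, (X - C (a ℓ))).natDegree = m := by
  rw [natDegree_prod]
  · simp [natDegree_X_sub_C]
  · intro ℓ _; exact X_sub_C_ne_zero _

lemma first_prod_eq (n i k : ℕ) :
    (∏ ℓ ∈ Finset.range (i - k), ((C (n : ℚ) - X) - C (ℓ : ℚ)))
      = (-1 : ℚ[X]) ^ (i - k) * ∏ ℓ ∈ Finset.range (i - k), (X - C ((n : ℚ) - ℓ)) := by
  calc (∏ ℓ ∈ Finset.range (i - k), ((C (n : ℚ) - X) - C (ℓ : ℚ)))
      = ∏ ℓ ∈ Finset.range (i - k), ((-1 : ℚ[X]) * (X - C ((n : ℚ) - ℓ))) := by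
        apply Finset.prod_congr rfl
        intro ℓ _
        rw [C_sub]
        ring
    _ = (-1 : ℚ[X]) ^ (i - k) * ∏ ℓ ∈ Finset.range (i - k), (X - C ((n : ℚ) - ℓ)) := by
        rw [Finset.prod_mul_distrib, Finset.prod_const, Finset.card_range]

theorem stmt_4 (n i : ℕ) (hi : i ≤ n) :
    (Cpoly n i).coeff i ≠ 0 ∧ (Cpoly n i).natDegree = i := by
  -- Coefficient computation
  have hcoeff : (Cpoly n i).coeff i =
      (-1 : ℚ) ^ i * ∑ k ∈ Finset.range (i + 1),
        (1 : ℚ) / ((i - k).factorial * k.factorial : ℚ) := by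
    rw [Cpoly, finset_sum_coeff, Finset.mul_sum]
    apply Finset.sum_congr rfl
    intro k hk
    have hki : k ≤ i := Nat.lt_succ_iff.mp (Finset.mem_range.mp hk)
    rw [coeff_smul, first_prod_eq]
    have hmon : ((∏ ℓ ∈ Finset.range (i - k), (X - C ((n : ℚ) - ℓ))) *
        ∏ ℓ ∈ Finset.range k, (X - C (ℓ : ℚ))).Monic :=
      (prodXsub_monic _ _).mul (prodXsub_monic _ _)
    have hdeg : ((∏ ℓ ∈ Finset.range (i - k), (X - C ((n : ℚ) - ℓ))) *
        ∏ ℓ ∈ Finset.range k, (X - C (ℓ : ℚ))).natDegree = i := by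
      rw [natDegree_mul (prodXsub_monic _ _).ne_zero (prodXsub_monic _ _).ne_zero,
        prodXsub_natDegree, prodXsub_natDegree, Nat.sub_add_cancel hki]
    have : (((-1 : ℚ[X]) ^ (i - k)) * ((∏ ℓ ∈ Finset.range (i - k), (X - C ((n : ℚ) - ℓ))) *
        ∏ ℓ ∈ Finset.range k, (X - C (ℓ : ℚ)))).coeff i
        = (-1 : ℚ) ^ (i - k) := by
      have h1 : ((-1 : ℚ[X]) ^ (i - k)) = C ((-1 : ℚ) ^ (i - k)) := by
        simp
      have h2 := hmon.coeff_natDegree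
      rw [hdeg] at h2
      rw [h1, coeff_C_mul, h2, mul_one]
    rw [mul_assoc, this]
    field_simp
    rw [smul_eq_mul, ← mul_assoc, mul_div_cancel₀ _ (by positivity), ← pow_add, Nat.add_sub_cancel' hki]
  have hpos : (0 : ℚ) < ∑ k ∈ Finset.range (i + 1),
      (1 : ℚ) / ((i - k).factorial * k.factorial : ℚ) := by
    apply Finset.sum_pos
    · intro k _
      positivity
    · exact ⟨0, Finset.mem_range.mpr (Nat.succ_pos i)⟩
  have hne : (Cpoly n i).coeff i ≠ 0 := by
    rw [hcoeff]
    apply mul_ne_zero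
    · exact pow_ne_zero _ (by norm_num)
    · exact ne_of_gt hpos
  refine ⟨hne, ?_⟩
  apply le_antisymm
  · apply natDegree_sum_le_of_forall_le
    intro k hk
    have hki : k ≤ i := Nat.lt_succ_iff.mp (Finset.mem_range.mp hk)
    apply (natDegree_smul_le _ _).trans
    apply (natDegree_mul_le).trans
    rw [first_prod_eq]
    calc ((-1 : ℚ[X]) ^ (i - k) * ∏ ℓ ∈ Finset.range (i - k), (X - C ((n : ℚ) - ℓ))).natDegree
          + (∏ ℓ ∈ Finset.range k, (X - C (ℓ : ℚ))).natDegree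
        ≤ (((-1 : ℚ[X]) ^ (i - k)).natDegree +
            (∏ ℓ ∈ Finset.range (i - k), (X - C ((n : ℚ) - ℓ))).natDegree) + k := by
          gcongr
          · exact natDegree_mul_le
          · exact (prodXsub_natDegree _ _).le
      _ ≤ i := by
          rw [prodXsub_natDegree, natDegree_pow, natDegree_neg, natDegree_one]
          omega
  · exact le_natDegree_of_ne_zero hne
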